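/- arXiv:1906.02514 — 2 statements merged into one kernel-verified Lean document; each statement's English description precedes it below -/
import Mathlib

section
/- ζ_G(1/(2mλ)) ≤ (2m)^{2m} / (e·(2m−1)^{2m}), where m is the number of edges of G and λ is the dominant eigenvalue of the adjacency matrix T of the oriented line graph. -/
open Real Set Filter Topology

/-- The Ihara zeta function of a graph, expressed through the power series
`ζ_G(x) = exp (∑_{k ≥ 2} tr(T^k) x^k / k)`, where `T` is the adjacency matrix of the
oriented line graph. -/
noncomputable def zetaG {n : ℕ} (T : Matrix (Fin n) (Fin n) ℝ) (x : ℝ) : ℝ :=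
  Real.exp (∑' k : ℕ, if 2 ≤ k then (T ^ k).trace * x ^ k / k else 0)

theorem zeta_value_bound_at_inv_two_m_lam (m : ℕ) (hm : 2 ≤ m)
    (T : Matrix (Fin (2 * m)) (Fin (2 * m)) ℝ)
    (lam : ℝ) (hlampos : 0 < lam)
    (htr_nonneg : ∀ k : ℕ, 0 ≤ (T ^ k).trace)
    (htr_ub : ∀ k : ℕ, (T ^ k).trace ≤ 2 * (m : ℝ) * lam ^ k) :
    zetaG T (1 / (2 * (m : ℝ) * lam)) ≤
      (2 * (m : ℝ)) ^ (2 * m) / (Real.exp 1 * (2 * (m : ℝ) - 1) ^ (2 * m)) := by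
  have hm2 : (2:ℝ) ≤ (m:ℝ) := by exact_mod_cast hm
  set a : ℝ := 2 * (m:ℝ) with ha
  have ha4 : (4:ℝ) ≤ a := by rw [ha]; linarith
  have ha0 : (0:ℝ) < a := by linarith
  have ha1 : (1:ℝ) < a := by linarith
  set y : ℝ := 1 / a with hy
  have hy0 : 0 < y := by positivity
  have hy1 : y < 1 := by rw [hy, div_lt_one ha0]; linarith
  set x : ℝ := 1 / (a * lam) with hx
  have hx0 : 0 < x := by positivity
  have hlx : lam * x = y := by
    rw [hx, hy]; field_simp
  -- the geometric-log series
  have h1 : HasSum (fun n : ℕ => y ^ (n+1) / (n+1)) (-Real.log (1 - y)) :=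
    Real.hasSum_pow_div_log_of_abs_lt_one (by rw [abs_of_pos hy0]; exact hy1)
  have h2 : HasSum (fun n : ℕ => y ^ (n+2) / (n+2)) (-Real.log (1 - y) - y) := by
    have hsum1 : HasSum (fun n : ℕ => y ^ (n+1) / ((n:ℝ)+1))
        ((-Real.log (1 - y) - y) + ∑ i ∈ Finset.range 1, y ^ (i+1) / ((i:ℝ)+1)) := by
      convert h1 using 1
      simp
    have h' := (hasSum_nat_add_iff 1).mpr hsum1
    convert h' using 2 with n
    · rfl
    push_cast; ring_nf
  set g : ℕ → ℝ := fun k => if 2 ≤ k then a * y ^ k / k else 0 with hg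
  have hgsum : HasSum g (a * (-Real.log (1 - y) - y)) := by
    have h3 : HasSum (fun n : ℕ => g (n+2)) (a * (-Real.log (1 - y) - y)) := by
      have := h2.mul_left a
      convert this using 2 with n
      · rfl
      simp only [hg, if_pos (by omega : 2 ≤ n + 2)]
      push_cast; ring
    have := (hasSum_nat_add_iff 2).mp h3
    simpa [hg, Finset.sum_range_succ] using this
  set f : ℕ → ℝ := fun k => if 2 ≤ k then (T ^ k).trace * x ^ k / k else 0 with hf
  have hfle : ∀ k, f k ≤ g k := by
    intro k
    simp only [hf, hg]
    split
    · next hk =>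
      have hk0 : (0:ℝ) < (k:ℝ) := by exact_mod_cast (by omega : 0 < k)
      have hnum : (T ^ k).trace * x ^ k ≤ a * y ^ k := by
        calc (T ^ k).trace * x ^ k ≤ (a * lam ^ k) * x ^ k := by
              apply mul_le_mul_of_nonneg_right (htr_ub k) (by positivity)
          _ = a * y ^ k := by rw [← hlx]; ring
      gcongr
    · exact le_refl 0
  have hf0 : ∀ k, 0 ≤ f k := by
    intro k
    simp only [hf]
    split
    · exact div_nonneg (mul_nonneg (htr_nonneg k) (by positivity)) (by positivity)
    · exact le_refl 0
  have hfsummable : Summable f :=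
    Summable.of_nonneg_of_le hf0 hfle hgsum.summable
  have hle : ∑' k, f k ≤ a * (-Real.log (1 - y) - y) := by
    rw [← hgsum.tsum_eq]
    exact Summable.tsum_le_tsum hfle hfsummable hgsum.summable
  have hz : zetaG T x = Real.exp (∑' k, f k) := rfl
  have key : zetaG T x ≤ Real.exp (a * (-Real.log (1 - y) - y)) := by
    rw [hz]; exact Real.exp_le_exp.mpr hle
  refine key.trans_eq ?_
  -- now compute the exponential
  have hsub : 1 - y = (a - 1) / a := by rw [hy]; field_simp
  have ha1' : (0:ℝ) < a - 1 := by linarith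
  have hlog : Real.log (1 - y) = Real.log (a - 1) - Real.log a := by
    rw [hsub, Real.log_div (by linarith) (by linarith)]
  have hay : a * y = 1 := by rw [hy]; field_simp
  have hcast : a = ((2 * m : ℕ) : ℝ) := by push_cast [ha]; ring
  have hexp : a * (-Real.log (1 - y) - y) =
      ((2 * m : ℕ) : ℝ) * Real.log a - ((2 * m : ℕ) : ℝ) * Real.log (a - 1) + (-1) := by
    rw [hlog, ← hcast]
    linear_combination -hay
  rw [hexp, Real.exp_add, Real.exp_sub, Real.exp_nat_mul, Real.exp_nat_mul,
    Real.exp_log ha0, Real.exp_log ha1', Real.exp_neg]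
  have h1e : Real.exp 1 ≠ 0 := (Real.exp_pos 1).ne'
  have h2e : (a - 1) ^ (2 * m) ≠ 0 := by positivity
  field_simp
end

section
/- The function f : (1, ∞) → ℝ defined by f(x) = x^x / (e·(x−1)^{x+1}) is monotone decreasing; equivalently its derivative f'(x) = −(1/e)(x−1)^{−x−2} x^x ((x−1)log(x−1) − x log(x) + log(x) + 2) is negative for all x > 1. -/
open Real Set

/-- The auxiliary function `f(x) = x^x / (e (x-1)^{x+1})`. -/
noncomputable def auxF (x : ℝ) : ℝ :=
  x ^ x / (Real.exp 1 * (x - 1) ^ (x + 1))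

lemma hasDerivAt_auxF {x : ℝ} (hx : 1 < x) :
    HasDerivAt auxF
      (-(1 / Real.exp 1) * (x - 1) ^ (-x - 2) * x ^ x *
        ((x - 1) * Real.log (x - 1) - x * Real.log x + Real.log x + 2)) x := by
  have hx0 : 0 < x := lt_trans one_pos hx
  have hx1 : 0 < x - 1 := by linarith
  have hu : HasDerivAt (fun y : ℝ => y ^ y)
      (1 * x * x ^ (x - 1) + 1 * x ^ x * Real.log x) x :=
    (hasDerivAt_id x).rpow (hasDerivAt_id x) hx0
  have hw : HasDerivAt (fun y : ℝ => (y - 1) ^ (y + 1))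
      (1 * (x + 1) * (x - 1) ^ (x + 1 - 1) + 1 * (x - 1) ^ (x + 1) * Real.log (x - 1)) x :=
    ((hasDerivAt_id x).sub_const 1).rpow ((hasDerivAt_id x).add_const 1) hx1
  have hv : HasDerivAt (fun y : ℝ => Real.exp 1 * (y - 1) ^ (y + 1))
      (Real.exp 1 *
        (1 * (x + 1) * (x - 1) ^ (x + 1 - 1) + 1 * (x - 1) ^ (x + 1) * Real.log (x - 1))) x :=
    hw.const_mul _
  have hvx : (0:ℝ) < Real.exp 1 * (x - 1) ^ (x + 1) :=
    mul_pos (Real.exp_pos 1) (Real.rpow_pos_of_pos hx1 _)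
  have hdiv := hu.div hv (ne_of_gt hvx)
  have : auxF = fun y : ℝ => y ^ y / (Real.exp 1 * (y - 1) ^ (y + 1)) := rfl
  rw [this]
  convert hdiv using 1
  case e'_4 => rfl
  case e'_5 => rfl
  case e'_8 => rfl
  have hA : (0:ℝ) < x ^ x := Real.rpow_pos_of_pos hx0 _
  have hB : (0:ℝ) < (x - 1) ^ x := Real.rpow_pos_of_pos hx1 _
  have e1 : x ^ (x - 1) = x ^ x / x := by
    rw [Real.rpow_sub hx0, Real.rpow_one]
  have e2 : (x - 1) ^ (x + 1) = (x - 1) ^ x * (x - 1) := by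
    rw [Real.rpow_add hx1, Real.rpow_one]
  have e3 : (x - 1) ^ (x + 1 - 1) = (x - 1) ^ x := by norm_num
  have e4 : (x - 1) ^ (-x - 2) = 1 / ((x - 1) ^ x * (x - 1) * (x - 1)) := by
    rw [show (-x - 2 : ℝ) = -(x + 1 + 1) by ring, Real.rpow_neg hx1.le,
      Real.rpow_add hx1, Real.rpow_add hx1, Real.rpow_one]
    field_simp
  rw [e1, e2, e3, e4]
  have hexp : Real.exp 1 ≠ 0 := Real.exp_ne_zero 1
  field_simp
  ring
  
theorem auxF_strict_anti :
    StrictAntiOn auxF (Ioi (1 : ℝ)) ∧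
      ∀ x : ℝ, 1 < x →
        deriv auxF x =
          -(1 / Real.exp 1) * (x - 1) ^ (-x - 2) * x ^ x *
            ((x - 1) * Real.log (x - 1) - x * Real.log x + Real.log x + 2) ∧
        deriv auxF x < 0 := by
  have hbr : ∀ x : ℝ, 1 < x →
      0 < (x - 1) * Real.log (x - 1) - x * Real.log x + Real.log x + 2 := by
    intro x hx
    have hx0 : 0 < x := lt_trans one_pos hx
    have hx1 : 0 < x - 1 := by linarith
    have hq : (0:ℝ) < x / (x - 1) := div_pos hx0 hx1
    have h1 := Real.log_le_sub_one_of_pos hq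
    rw [Real.log_div (ne_of_gt hx0) (ne_of_gt hx1)] at h1
    have h2 : x / (x - 1) - 1 = 1 / (x - 1) := by field_simp; ring
    rw [h2] at h1
    have h3 : (x - 1) * (Real.log x - Real.log (x - 1)) ≤ 1 := by
      have := mul_le_mul_of_nonneg_left h1 hx1.le
      rw [mul_one_div, div_self (ne_of_gt hx1)] at this
      linarith
    nlinarith
  have hneg : ∀ x : ℝ, 1 < x →
      -(1 / Real.exp 1) * (x - 1) ^ (-x - 2) * x ^ x *
        ((x - 1) * Real.log (x - 1) - x * Real.log x + Real.log x + 2) < 0 := by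
    intro x hx
    have hx0 : 0 < x := lt_trans one_pos hx
    have hx1 : 0 < x - 1 := by linarith
    have hp : 0 < (1 / Real.exp 1) * (x - 1) ^ (-x - 2) * x ^ x *
        ((x - 1) * Real.log (x - 1) - x * Real.log x + Real.log x + 2) := by
      have := hbr x hx
      positivity
    nlinarith
  constructor
  · apply strictAntiOn_of_deriv_neg (convex_Ioi 1)
    · intro x hx
      exact ((hasDerivAt_auxF hx).continuousAt).continuousWithinAt
    · intro x hx
      rw [interior_Ioi] at hx
      rw [(hasDerivAt_auxF hx).deriv]
      exact hneg x hx
  · intro x hx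
    rw [(hasDerivAt_auxF hx).deriv]
    exact ⟨rfl, hneg x hx⟩
end
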